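/- Let M be a topological space, let E and F be finite-dimensional inner product spaces over 𝕜 ∈ {ℝ, ℂ}, and let d : M → (F →L[𝕜] E) be a continuous family of linear maps. Suppose (x_n)_{n∈ℕ} is a sequence in M converging to x ∈ M, and V is a subspace of E such that the images range(d(x_n)) converge to V in the gap metric, i.e. ‖P_{range(d(x_n))} − P_V‖ → 0. Then range(d(x)) ≤ V. -/

import Mathlib

open FiniteDimensional Filter

/-- The orthogonal projection onto a subspace `V` of a finite-dimensional inner product
space, regarded as a continuous linear endomorphism. -/
noncomputable def orthProjection {𝕜 E : Type*} [RCLike 𝕜] [NormedAddCommGroup E]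
    [InnerProductSpace 𝕜 E] [FiniteDimensional 𝕜 E] (V : Submodule 𝕜 E) : E →L[𝕜] E :=
  V.subtypeL.comp (V.orthogonalProjectionOnto)

lemma orthProjection_apply_of_mem {𝕜 E : Type*} [RCLike 𝕜] [NormedAddCommGroup E]
    [InnerProductSpace 𝕜 E] [FiniteDimensional 𝕜 E] (V : Submodule 𝕜 E) {v : E}
    (hv : v ∈ V) : orthProjection V v = v := by
  exact V.starProjection_eq_self_iff.mpr hv

/-- If the images `range (d (x n))` of a continuous family of linear maps converge in the
gap metric to `V` along a sequence `x n → x`, then `range (d x) ≤ V`. -/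
theorem range_le_of_gap_limit {𝕜 E F M : Type*} [RCLike 𝕜]
    [NormedAddCommGroup E] [InnerProductSpace 𝕜 E] [FiniteDimensional 𝕜 E]
    [NormedAddCommGroup F] [InnerProductSpace 𝕜 F] [FiniteDimensional 𝕜 F]
    [TopologicalSpace M]
    (d : M → (F →L[𝕜] E)) (hd : Continuous d)
    (x : M) (xs : ℕ → M) (hxs : Tendsto xs atTop (nhds x))
    (V : Submodule 𝕜 E)
    (hconv : Tendsto
      (fun n => ‖orthProjection (LinearMap.range (d (xs n) : F →ₗ[𝕜] E)) - orthProjection V‖)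
      atTop (nhds 0)) :
    LinearMap.range (d x : F →ₗ[𝕜] E) ≤ V := by
  rintro _ ⟨u, rfl⟩
  -- the vectors v n := d (xs n) u converge to d x u
  have hv : Tendsto (fun n => d (xs n) u) atTop (nhds (d x u)) := by
    have : Tendsto (fun n => d (xs n)) atTop (nhds (d x)) := (hd.tendsto x).comp hxs
    exact (ContinuousLinearMap.apply 𝕜 E u).continuous.continuousAt.tendsto.comp this
  -- P_n (v n) = v n
  have hfix : ∀ n, orthProjection (LinearMap.range (d (xs n) : F →ₗ[𝕜] E)) (d (xs n) u)
      = d (xs n) u := fun n =>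
    orthProjection_apply_of_mem _ (LinearMap.mem_range_self (d (xs n) : F →ₗ[𝕜] E) u)
  -- the difference term tends to zero
  have hdiff : Tendsto (fun n =>
      (orthProjection (LinearMap.range (d (xs n) : F →ₗ[𝕜] E)) - orthProjection V) (d (xs n) u))
      atTop (nhds 0) := by
    rw [tendsto_zero_iff_norm_tendsto_zero]
    have hb : Tendsto (fun n => ‖orthProjection (LinearMap.range (d (xs n) : F →ₗ[𝕜] E))
        - orthProjection V‖ * ‖d (xs n) u‖) atTop (nhds (0 * ‖d x u‖)) :=
      hconv.mul (hv.norm)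
    rw [zero_mul] at hb
    refine squeeze_zero (fun n => norm_nonneg _) (fun n => ?_) hb
    exact ContinuousLinearMap.le_opNorm _ _
  -- hence P_V (v n) → d x u
  have h1 : Tendsto (fun n => orthProjection V (d (xs n) u)) atTop (nhds (d x u)) := by
    have := hv.sub hdiff
    simp only [ContinuousLinearMap.sub_apply, hfix, sub_sub_cancel, sub_zero] at this
    exact this
  have h2 : Tendsto (fun n => orthProjection V (d (xs n) u)) atTop
      (nhds (orthProjection V (d x u))) :=
    ((orthProjection V).continuous.continuousAt.tendsto).comp hv
  have heq : orthProjection V (d x u) = d x u := tendsto_nhds_unique h2 h1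
  have : ((V.orthogonalProjectionOnto (d x u) : V) : E) = d x u := heq
  exact this ▸ (V.orthogonalProjectionOnto (d x u)).2
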